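/- Suppose j < k < l and v ⋖ v(j,l) ⋖ v(j,l)(j,k) = w is a saturated chain of length two in the Bruhat order from v to w. Then v ⋖ v(j,k) ⋖ v(j,k)(k,l) = w is also a saturated chain in the Bruhat order from v to w. -/

import Mathlib

noncomputable section

/-- The length (number of inversions) of a finitely supported permutation of ℕ. -/
def len (w : Equiv.Perm ℕ) : ℕ := Set.ncard {p : ℕ × ℕ | p.1 < p.2 ∧ w p.2 < w p.1}

/-- `covTrans v a b` : the permutation `v·(a,b)` (swap the values in positions `a < b`,
positive integers) covers `v` in the Bruhat order, i.e. `ℓ(v·(a,b)) = ℓ(v) + 1`. -/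
def covTrans (v : Equiv.Perm ℕ) (a b : ℕ) : Prop :=
  0 < a ∧ a < b ∧ len (v * Equiv.swap a b) = len v + 1

namespace Bruhat2b

open Equiv Set

/-- The inversion set of a permutation of ℕ. -/
def InvSet (w : Equiv.Perm ℕ) : Set (ℕ × ℕ) := {p | p.1 < p.2 ∧ w p.2 < w p.1}

lemma len_eq (w : Equiv.Perm ℕ) : len w = (InvSet w).ncard := rfl

/-- Sorting map: applies `t` to both coordinates and sorts. -/
def sp (t : Equiv.Perm ℕ) (p : ℕ × ℕ) : ℕ × ℕ :=
  if t p.1 < t p.2 then (t p.1, t p.2) else (t p.2, t p.1)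

lemma sp_sorted (t : Equiv.Perm ℕ) (p : ℕ × ℕ) : (sp t p).1 ≤ (sp t p).2 := by
  unfold sp; split <;> simp <;> omega

lemma sp_sp (t : Equiv.Perm ℕ) (ht : ∀ x, t (t x) = x) {p : ℕ × ℕ} (hp : p.1 ≤ p.2) :
    sp t (sp t p) = p := by
  obtain ⟨p1, p2⟩ := p
  simp only [Prod.mk_le_mk] at *
  unfold sp
  split
  · next h =>
    simp only [ht]
    have h12 : p1 < p2 := lt_of_le_of_ne hp (fun he => by simp [he] at h)
    simp [h12]
  · next h =>
    simp only [ht]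
    have : ¬ p2 < p1 := not_lt.2 hp
    simp [this]

def TSet (v t : Equiv.Perm ℕ) : Set (ℕ × ℕ) := (InvSet v \ InvSet t) ∪ (InvSet t \ InvSet v)

lemma TSet_sorted {v t : Equiv.Perm ℕ} {p : ℕ × ℕ} (hp : p ∈ TSet v t) : p.1 < p.2 := by
  rcases hp with h | h
  · exact h.1.1
  · exact h.1.1

lemma mem_key (v t : Equiv.Perm ℕ) (ht : ∀ x, t (t x) = x) {p : ℕ × ℕ} (hp : p.1 ≤ p.2) :
    sp t p ∈ InvSet (v * t) ↔ p ∈ TSet v t := by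
  obtain ⟨p1, p2⟩ := p
  simp only [Prod.mk_le_mk] at hp
  unfold sp TSet InvSet
  simp only [Set.mem_setOf_eq, Set.mem_union, Set.mem_diff, Set.mem_setOf_eq,
    Equiv.Perm.mul_apply]
  split
  · next h =>
    have hne : p1 ≠ p2 := fun he => by simp [he] at h
    have h12 : p1 < p2 := lt_of_le_of_ne hp hne
    simp only [ht]
    constructor
    · rintro ⟨-, hv⟩
      exact Or.inl ⟨⟨h12, hv⟩, fun hc => absurd hc.2 (not_lt.2 (le_of_lt h))⟩
    · rintro (⟨⟨-, hv⟩, -⟩ | ⟨⟨-, hvt⟩, -⟩)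
      · exact ⟨h, hv⟩
      · exact absurd hvt (not_lt.2 (le_of_lt h))
  · next h =>
    simp only [ht]
    rcases eq_or_lt_of_le (not_lt.1 h) with heq | hlt
    · have hpe : p1 = p2 := (t.injective heq).symm
      constructor
      · rintro ⟨hc, -⟩; omega
      · rintro (⟨⟨hc, -⟩, -⟩ | ⟨⟨hc, -⟩, -⟩) <;> exact absurd hc (by omega)
    · have hne : p1 ≠ p2 := fun he => by simp [he] at hlt
      have h12 : p1 < p2 := lt_of_le_of_ne hp hne
      have hvne : v p1 ≠ v p2 := fun he => hne (v.injective he)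
      constructor
      · rintro ⟨-, hv⟩
        exact Or.inr ⟨⟨h12, hlt⟩, fun hc => absurd hv (not_lt.2 (le_of_lt hc.2))⟩
      · rintro (⟨⟨-, hv⟩, hnt⟩ | ⟨-, hnv⟩)
        · exact absurd ⟨h12, hlt⟩ hnt
        · refine ⟨hlt, ?_⟩
          rcases lt_or_gt_of_ne hvne with h' | h'
          · exact h'
          · exact absurd ⟨h12, h'⟩ hnv

lemma image_eq (v t : Equiv.Perm ℕ) (ht : ∀ x, t (t x) = x) :
    sp t '' TSet v t = InvSet (v * t) := by
  apply Set.Subset.antisymm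
  · rintro _ ⟨p, hp, rfl⟩
    exact (mem_key v t ht (le_of_lt (TSet_sorted hp))).2 hp
  · intro p hp
    have hps : p.1 ≤ p.2 := le_of_lt hp.1
    have h1 : (sp t p).1 ≤ (sp t p).2 := sp_sorted t p
    have h2 : sp t (sp t p) ∈ InvSet (v * t) := by rw [sp_sp t ht hps]; exact hp
    exact ⟨sp t p, (mem_key v t ht h1).1 h2, sp_sp t ht hps⟩

lemma injOn_sp (t : Equiv.Perm ℕ) (ht : ∀ x, t (t x) = x) :
    Set.InjOn (sp t) (TSet v t) := by
  intro x hx y hy hxy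
  rw [← sp_sp t ht (le_of_lt (TSet_sorted hx)), hxy, sp_sp t ht (le_of_lt (TSet_sorted hy))]

lemma len_mul (v t : Equiv.Perm ℕ) (ht : ∀ x, t (t x) = x) :
    len (v * t) = (TSet v t).ncard := by
  rw [len_eq, ← image_eq v t ht, Set.ncard_image_of_injOn (injOn_sp t ht)]

lemma finite_iff (v t : Equiv.Perm ℕ) (ht : ∀ x, t (t x) = x) (hft : (InvSet t).Finite) :
    (InvSet (v * t)).Finite ↔ (InvSet v).Finite := by
  rw [← image_eq v t ht]
  constructor
  · intro h
    have hT : (TSet v t).Finite := Set.Finite.of_finite_image h (injOn_sp t ht)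
    have : InvSet v ⊆ TSet v t ∪ InvSet t := by
      intro p hp
      by_cases hpt : p ∈ InvSet t
      · exact Or.inr hpt
      · exact Or.inl (Or.inl ⟨hp, hpt⟩)
    exact Set.Finite.subset (hT.union hft) this
  · intro h
    exact Set.Finite.image _ (Set.Finite.union (h.diff) (hft.diff))

lemma swap_invol (a b : ℕ) : ∀ x, Equiv.swap a b (Equiv.swap a b x) = x := fun x =>
  Equiv.swap_apply_self a b x

lemma invSet_swap (a b : ℕ) (hab : a < b) :
    InvSet (Equiv.swap a b) = ({a} ×ˢ Set.Ioc a b) ∪ (Set.Ioo a b ×ˢ {b}) := by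
  ext ⟨p, q⟩
  simp only [InvSet, Set.mem_setOf_eq, Set.mem_union, Set.mem_prod, Set.mem_singleton_iff,
    Set.mem_Ioc, Set.mem_Ioo, Equiv.swap_apply_def]
  split_ifs <;> omega

lemma finite_invSet_swap (a b : ℕ) (hab : a < b) : (InvSet (Equiv.swap a b)).Finite := by
  rw [invSet_swap a b hab]
  exact Set.Finite.union (Set.Finite.prod (Set.finite_singleton a) (Set.finite_Ioc a b))
    (Set.Finite.prod (Set.finite_Ioo a b) (Set.finite_singleton b))

lemma ncard_left (a : ℕ) (S : Set ℕ) : (({a} : Set ℕ) ×ˢ S).ncard = S.ncard := by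
  rw [Set.singleton_prod, Set.ncard_image_of_injective]
  exact fun x y h => by simpa using h

lemma ncard_right (b : ℕ) (S : Set ℕ) : (S ×ˢ ({b} : Set ℕ)).ncard = S.ncard := by
  rw [Set.prod_singleton, Set.ncard_image_of_injective]
  exact fun x y h => by simpa using h

lemma key (v : Equiv.Perm ℕ) (a b : ℕ) (hab : a < b) (hI : (InvSet v).Finite)
    (hval : v a < v b) :
    len (v * Equiv.swap a b)
      = len v + 1 + 2 * ({m : ℕ | a < m ∧ m < b ∧ v a < v m ∧ v m < v b}).ncard := by
  classical
  have hswap := swap_invol a b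
  have hFfin : (InvSet (Equiv.swap a b)).Finite := finite_invSet_swap a b hab
  set M : Set ℕ := {m : ℕ | a < m ∧ m < b ∧ v a < v m ∧ v m < v b} with hMdef
  set Am : Set ℕ := {m : ℕ | a < m ∧ m < b ∧ v m < v a} with hAdef
  set Bp : Set ℕ := {m : ℕ | a < m ∧ m < b ∧ v b < v m} with hBdef
  have hMfin : M.Finite := (Set.finite_Ioo a b).subset (fun m hm => ⟨hm.1, hm.2.1⟩)
  have hAfin : Am.Finite := (Set.finite_Ioo a b).subset (fun m hm => ⟨hm.1, hm.2.1⟩)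
  have hBfin : Bp.Finite := (Set.finite_Ioo a b).subset (fun m hm => ⟨hm.1, hm.2.1⟩)
  have hIF : InvSet v ∩ InvSet (Equiv.swap a b) = ({a} ×ˢ Am) ∪ (Bp ×ˢ {b}) := by
    rw [invSet_swap a b hab]
    ext ⟨p, q⟩
    simp only [Set.mem_inter_iff, Set.mem_union, Set.mem_prod, Set.mem_singleton_iff,
      Set.mem_Ioc, Set.mem_Ioo, Set.mem_setOf_eq, InvSet, hAdef, hBdef]
    constructor
    · rintro ⟨⟨hpq, hinv⟩, ⟨hpa, hq1, hq2⟩ | ⟨⟨hp1, hp2⟩, hqb⟩⟩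
      · rw [hpa] at hinv
        refine Or.inl ⟨hpa, hq1, ?_, hinv⟩
        rcases lt_or_eq_of_le hq2 with h | hqb
        · exact h
        · rw [hqb] at hinv; omega
      · rw [hqb] at hinv
        exact Or.inr ⟨⟨hp1, hp2, hinv⟩, hqb⟩
    · rintro (⟨hpa, hq1, hq2, hv⟩ | ⟨⟨hp1, hp2, hv⟩, hqb⟩)
      · rw [hpa]
        exact ⟨⟨hq1, hv⟩, Or.inl ⟨rfl, hq1, le_of_lt hq2⟩⟩
      · rw [hqb]
        exact ⟨⟨hp2, hv⟩, Or.inr ⟨⟨hp1, hp2⟩, rfl⟩⟩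
  have hFI : InvSet (Equiv.swap a b) \ InvSet v
      = ({a} ×ˢ insert b (M ∪ Bp)) ∪ ((M ∪ Am) ×ˢ {b}) := by
    rw [invSet_swap a b hab]
    ext ⟨p, q⟩
    simp only [Set.mem_diff, Set.mem_union, Set.mem_prod, Set.mem_singleton_iff,
      Set.mem_insert_iff, Set.mem_Ioc, Set.mem_Ioo, Set.mem_setOf_eq, InvSet,
      hMdef, hAdef, hBdef]
    constructor
    · rintro ⟨⟨hpa, hq1, hq2⟩ | ⟨⟨hp1, hp2⟩, hqb⟩, hni⟩
      · rw [hpa] at hni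
        refine Or.inl ⟨hpa, ?_⟩
        rcases lt_or_eq_of_le hq2 with hqb | hqb
        · right
          have hvne : v q ≠ v a := fun h => by have := v.injective h; omega
          have hva : v a < v q := by
            rcases lt_or_gt_of_ne hvne with h | h
            · exact absurd ⟨hq1, h⟩ hni
            · exact h
          have hvnb : v q ≠ v b := fun h => by have := v.injective h; omega
          rcases lt_or_gt_of_ne hvnb with h | h
          · exact Or.inl ⟨hq1, hqb, hva, h⟩
          · exact Or.inr ⟨hq1, hqb, h⟩
        · exact Or.inl hqb
      · rw [hqb] at hni
        refine Or.inr ⟨?_, hqb⟩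
        have hvne : v p ≠ v b := fun h => by have := v.injective h; omega
        have hvp : v p < v b := by
          rcases lt_or_gt_of_ne hvne with h | h
          · exact h
          · exact absurd ⟨hp2, h⟩ hni
        have hvna : v p ≠ v a := fun h => by have := v.injective h; omega
        rcases lt_or_gt_of_ne hvna with h | h
        · exact Or.inr ⟨hp1, hp2, h⟩
        · exact Or.inl ⟨hp1, hp2, h, hvp⟩
    · rintro (⟨hpa, hqb | (⟨hq1, hq2, hv1, hv2⟩ | ⟨hq1, hq2, hv⟩)⟩ |
        ⟨⟨hp1, hp2, hv1, hv2⟩ | ⟨hp1, hp2, hv⟩, hqb⟩)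
      · exact ⟨Or.inl ⟨hpa, by omega, by omega⟩,
          fun hc => by rw [hpa, hqb] at hc; omega⟩
      · exact ⟨Or.inl ⟨hpa, hq1, le_of_lt hq2⟩,
          fun hc => by rw [hpa] at hc; omega⟩
      · exact ⟨Or.inl ⟨hpa, hq1, le_of_lt hq2⟩,
          fun hc => by rw [hpa] at hc; omega⟩
      · exact ⟨Or.inr ⟨⟨hp1, hp2⟩, hqb⟩,
          fun hc => by rw [hqb] at hc; omega⟩
      · exact ⟨Or.inr ⟨⟨hp1, hp2⟩, hqb⟩,
          fun hc => by rw [hqb] at hc; omega⟩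
  have d1 : Disjoint (({a} : Set ℕ) ×ˢ Am) (Bp ×ˢ ({b} : Set ℕ)) := by
    rw [Set.disjoint_left]
    rintro ⟨p, q⟩ ⟨hp1, -⟩ ⟨hp2, -⟩
    have h1 : p = a := hp1
    have h2 : a < p := hp2.1
    omega
  have d2 : Disjoint (({a} : Set ℕ) ×ˢ insert b (M ∪ Bp)) ((M ∪ Am) ×ˢ ({b} : Set ℕ)) := by
    rw [Set.disjoint_left]
    rintro ⟨p, q⟩ ⟨hp1, -⟩ ⟨hp2, -⟩
    have h1 : p = a := hp1
    have h2 : a < p := by rcases hp2 with h | h; exact h.1; exact h.1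
    omega
  have dMB : Disjoint M Bp := by
    rw [Set.disjoint_left]; rintro m ⟨-, -, -, h1⟩ ⟨-, -, h2⟩; omega
  have dMA : Disjoint M Am := by
    rw [Set.disjoint_left]; rintro m ⟨-, -, h1, -⟩ ⟨-, -, h2⟩; omega
  have hbnotin : b ∉ M ∪ Bp := by rintro (⟨-, h, -⟩ | ⟨-, h, -⟩) <;> omega
  have hlen : len (v * Equiv.swap a b)
      = (InvSet v \ InvSet (Equiv.swap a b)).ncard
        + (InvSet (Equiv.swap a b) \ InvSet v).ncard := by
    rw [len_mul v _ hswap, TSet,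
      Set.ncard_union_eq disjoint_sdiff_sdiff (hI.diff) (hFfin.diff)]
  have h1 : (InvSet v ∩ InvSet (Equiv.swap a b)).ncard
      + (InvSet v \ InvSet (Equiv.swap a b)).ncard = len v := by
    rw [len_eq]; exact Set.ncard_inter_add_ncard_diff_eq_ncard _ _ hI
  have h2 : (InvSet v ∩ InvSet (Equiv.swap a b)).ncard = Am.ncard + Bp.ncard := by
    rw [hIF, Set.ncard_union_eq d1 ((Set.finite_singleton a).prod hAfin)
      (hBfin.prod (Set.finite_singleton b)), ncard_left, ncard_right]
  have h3 : (InvSet (Equiv.swap a b) \ InvSet v).ncard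
      = (M.ncard + Bp.ncard + 1) + (M.ncard + Am.ncard) := by
    rw [hFI, Set.ncard_union_eq d2
      ((Set.finite_singleton a).prod (((hMfin.union hBfin).insert b)))
      ((hMfin.union hAfin).prod (Set.finite_singleton b)), ncard_left, ncard_right,
      Set.ncard_insert_of_notMem hbnotin (hMfin.union hBfin),
      Set.ncard_union_eq dMB hMfin hBfin, Set.ncard_union_eq dMA hMfin hAfin]
  omega

lemma finite_of_cov (v : Equiv.Perm ℕ) (a b : ℕ) (hab : a < b)
    (h : len (v * Equiv.swap a b) = len v + 1) : (InvSet v).Finite := by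
  by_contra hinf
  have h2 : ¬ (InvSet (v * Equiv.swap a b)).Finite := fun hf =>
    hinf ((finite_iff v _ (swap_invol a b) (finite_invSet_swap a b hab)).1 hf)
  rw [len_eq, len_eq, Set.Infinite.ncard hinf, Set.Infinite.ncard h2] at h
  omega

lemma cov_iff (v : Equiv.Perm ℕ) (a b : ℕ) (hab : a < b) (hI : (InvSet v).Finite) :
    len (v * Equiv.swap a b) = len v + 1 ↔
      v a < v b ∧ ∀ m, a < m → m < b → ¬(v a < v m ∧ v m < v b) := by
  constructor
  · intro h
    have hvne : v a ≠ v b := fun he => by have := v.injective he; omega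
    have hval : v a < v b := by
      rcases lt_or_gt_of_ne hvne with h' | h'
      · exact h'
      · -- contradiction: apply key to w = v * swap a b
        exfalso
        set w := v * Equiv.swap a b with hw
        have hwI : (InvSet w).Finite :=
          (finite_iff v _ (swap_invol a b) (finite_invSet_swap a b hab)).2 hI
        have hwa : w a = v b := by
          rw [hw, Equiv.Perm.mul_apply, Equiv.swap_apply_left]
        have hwb : w b = v a := by
          rw [hw, Equiv.Perm.mul_apply, Equiv.swap_apply_right]
        have hwval : w a < w b := by rw [hwa, hwb]; exact h'
        have hkey := key w a b hab hwI hwval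
        have hws : w * Equiv.swap a b = v := by
          rw [hw, mul_assoc, Equiv.swap_mul_self, mul_one]
        rw [hws] at hkey
        omega
    refine ⟨hval, ?_⟩
    have hkey := key v a b hab hI hval
    rw [h] at hkey
    have hMfin : ({m : ℕ | a < m ∧ m < b ∧ v a < v m ∧ v m < v b}).Finite :=
      (Set.finite_Ioo a b).subset (fun m hm => ⟨hm.1, hm.2.1⟩)
    have hM0 : ({m : ℕ | a < m ∧ m < b ∧ v a < v m ∧ v m < v b}).ncard = 0 := by omega
    have hMe : ({m : ℕ | a < m ∧ m < b ∧ v a < v m ∧ v m < v b}) = ∅ :=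
      (Set.ncard_eq_zero hMfin).1 hM0
    intro m hm1 hm2 hc
    exact (Set.eq_empty_iff_forall_notMem.1 hMe m) ⟨hm1, hm2, hc.1, hc.2⟩
  · rintro ⟨hval, hm⟩
    have hkey := key v a b hab hI hval
    have hMe : ({m : ℕ | a < m ∧ m < b ∧ v a < v m ∧ v m < v b}) = ∅ := by
      ext m
      simp only [Set.mem_setOf_eq, Set.mem_empty_iff_false, iff_false, not_and]
      intro h1 h2 h3 h4
      exact hm m h1 h2 ⟨h3, h4⟩
    rw [hMe, Set.ncard_empty] at hkey
    omega

end Bruhat2b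

open Bruhat2b

/-- Intertwining relation 2(b): if `j < k < l` and `v ⋖ v(j,l) ⋖ v(j,l)(j,k) = w` is a
saturated chain in Bruhat order, then `v ⋖ v(j,k) ⋖ v(j,k)(k,l) = w` is also a saturated
chain from `v` to `w`. -/
theorem intertwine_2b (v : Equiv.Perm ℕ) (j k l : ℕ) (hjk : j < k) (hkl : k < l)
    (c1 : covTrans v j l) (c2 : covTrans (v * Equiv.swap j l) j k) :
    covTrans v j k ∧ covTrans (v * Equiv.swap j k) k l ∧
      v * Equiv.swap j k * Equiv.swap k l = v * Equiv.swap j l * Equiv.swap j k := by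
  obtain ⟨hj0, hjl, h1⟩ := c1
  obtain ⟨-, -, h2⟩ := c2
  have finv : (InvSet v).Finite := finite_of_cov v j l hjl h1
  have P1 := (cov_iff v j l hjl finv).1 h1
  have finu : (InvSet (v * Equiv.swap j l)).Finite :=
    (finite_iff v _ (swap_invol j l) (finite_invSet_swap j l hjl)).2 finv
  have P2 := (cov_iff (v * Equiv.swap j l) j k hjk finu).1 h2
  have euj : (v * Equiv.swap j l) j = v l := by
    rw [Equiv.Perm.mul_apply, Equiv.swap_apply_left]
  have euk : (v * Equiv.swap j l) k = v k := by
    rw [Equiv.Perm.mul_apply, Equiv.swap_apply_of_ne_of_ne (by omega) (by omega)]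
  have hvlk : v l < v k := by
    have := P2.1
    rw [euj, euk] at this
    exact this
  have hvjl : v j < v l := P1.1
  have g1 : covTrans v j k := by
    refine ⟨hj0, hjk, (cov_iff v j k hjk finv).2 ⟨lt_trans hvjl hvlk, ?_⟩⟩
    intro m hm1 hm2 hc
    have hvm_ne : v m ≠ v l := fun h => by have := v.injective h; omega
    rcases lt_or_gt_of_ne hvm_ne with h | h
    · exact P1.2 m hm1 (lt_trans hm2 hkl) ⟨hc.1, h⟩
    · have eum : (v * Equiv.swap j l) m = v m := by
        rw [Equiv.Perm.mul_apply, Equiv.swap_apply_of_ne_of_ne (by omega) (by omega)]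
      refine P2.2 m hm1 hm2 ?_
      rw [euj, euk, eum]
      exact ⟨h, hc.2⟩
  have finx : (InvSet (v * Equiv.swap j k)).Finite :=
    (finite_iff v _ (swap_invol j k) (finite_invSet_swap j k hjk)).2 finv
  have e1 : (v * Equiv.swap j k) k = v j := by
    rw [Equiv.Perm.mul_apply, Equiv.swap_apply_right]
  have e2 : (v * Equiv.swap j k) l = v l := by
    rw [Equiv.Perm.mul_apply, Equiv.swap_apply_of_ne_of_ne (by omega) (by omega)]
  have g2 : covTrans (v * Equiv.swap j k) k l := by
    refine ⟨by omega, hkl, (cov_iff _ k l hkl finx).2 ⟨?_, ?_⟩⟩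
    · rw [e1, e2]; exact hvjl
    · intro m hm1 hm2 hc
      have em : (v * Equiv.swap j k) m = v m := by
        rw [Equiv.Perm.mul_apply, Equiv.swap_apply_of_ne_of_ne (by omega) (by omega)]
      rw [e1, e2, em] at hc
      exact P1.2 m (by omega) hm2 hc
  refine ⟨g1, g2, ?_⟩
  rw [mul_assoc, mul_assoc]
  congr 1
  ext x
  simp only [Equiv.Perm.mul_apply, Equiv.swap_apply_def]
  split_ifs <;> omega

end
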